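/- The TU-core of the multi-winner Approval Voting (AV) game is always non-empty. That is, for every approval profile (finite alternatives C, finite voters V with approval sets A_i ⊆ C) and every committee size k ≤ |C|, there exists a utility function α : V → ℝ≥0 with ∑_{v∈V} α(v) = max over size-k committees W of ∑_{v∈V} |A(v) ∩ W|, such that for every coalition V' ⊆ V and every committee W' with |W'| ≤ ⌊|V'|·k/|V|⌋, one has ∑_{v∈V'} α(v) ≥ ∑_{v∈V'} |A(v) ∩ W'|. -/

import Mathlib

/-- The TU-core of the AV multi-winner voting game is non-empty. -/
theorem stmt3 {C V : Type*} [Fintype C] [Fintype V] [Nonempty V] [DecidableEq C]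
    (A : V → Finset C) (k : ℕ) (hk : k ≤ Fintype.card C) :
    ∃ (α : V → ℝ) (W₀ : Finset C), W₀.card = k ∧
      (∀ W : Finset C, W.card = k →
        ∑ v : V, ((A v ∩ W).card : ℝ) ≤ ∑ v : V, ((A v ∩ W₀).card : ℝ)) ∧
      (∀ v, 0 ≤ α v) ∧
      (∑ v : V, α v = ∑ v : V, ((A v ∩ W₀).card : ℝ)) ∧
      ∀ (V' : Finset V) (W' : Finset C),
        W'.card ≤ V'.card * k / Fintype.card V →
        ∑ v ∈ V', ((A v ∩ W').card : ℝ) ≤ ∑ v ∈ V', α v := by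
  classical
  set n : ℕ := Fintype.card V with hn
  have hn0 : 0 < n := Fintype.card_pos
  -- global approval count of a candidate
  set cnt : C → ℕ := fun c => (Finset.univ.filter fun v => c ∈ A v).card with hcnt
  -- coalition approval count
  have cntS_le : ∀ (S : Finset V) (c : C), (S.filter fun v => c ∈ A v).card ≤ cnt c := by
    intro S c
    exact Finset.card_le_card (Finset.filter_subset_filter _ (Finset.subset_univ S))
  have cnt_le_n : ∀ c, cnt c ≤ n := by
    intro c
    exact (Finset.card_filter_le _ _).trans (le_of_eq rfl)
  -- double counting
  have hdc : ∀ (S : Finset V) (W : Finset C) (f : C → ℝ),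
      ∑ v ∈ S, ∑ c ∈ A v ∩ W, f c
        = ∑ c ∈ W, ((S.filter fun v => c ∈ A v).card : ℝ) * f c := by
    intro S W f
    have h1 : ∀ v, A v ∩ W = W.filter (fun c => c ∈ A v) := by
      intro v
      rw [Finset.filter_mem_eq_inter, Finset.inter_comm]
    calc ∑ v ∈ S, ∑ c ∈ A v ∩ W, f c
        = ∑ v ∈ S, ∑ c ∈ W, if c ∈ A v then f c else 0 := by
          refine Finset.sum_congr rfl fun v _ => ?_
          rw [h1 v, Finset.sum_filter]
      _ = ∑ c ∈ W, ∑ v ∈ S, if c ∈ A v then f c else 0 := Finset.sum_comm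
      _ = ∑ c ∈ W, ((S.filter fun v => c ∈ A v).card : ℝ) * f c := by
          refine Finset.sum_congr rfl fun c _ => ?_
          rw [← Finset.sum_filter, Finset.sum_const, nsmul_eq_mul]
  have hdc_card : ∀ (S : Finset V) (W : Finset C),
      ∑ v ∈ S, ((A v ∩ W).card : ℝ)
        = ∑ c ∈ W, ((S.filter fun v => c ∈ A v).card : ℝ) := by
    intro S W
    have := hdc S W (fun _ => (1 : ℝ))
    simpa [Finset.sum_const, mul_one] using this
  -- choose optimal committee W₀ of size k
  obtain ⟨W₀, hW₀mem, hW₀max⟩ :=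
    Finset.exists_max_image ((Finset.univ : Finset C).powersetCard k)
      (fun W => ∑ c ∈ W, cnt c)
      ((Finset.powersetCard_nonempty).2 (by simpa using hk))
  rw [Finset.mem_powersetCard_univ] at hW₀mem
  -- threshold t
  set t : ℕ := if hW : W₀.Nonempty then W₀.inf' hW cnt else n with ht
  have ht_in : ∀ c ∈ W₀, t ≤ cnt c := by
    intro c hc
    rw [ht]
    have hW : W₀.Nonempty := ⟨c, hc⟩
    simp only [dif_pos hW]
    exact Finset.inf'_le _ hc
  have ht_out : ∀ c, c ∉ W₀ → cnt c ≤ t := by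
    intro c hc
    by_cases hW : W₀.Nonempty
    · obtain ⟨c₀, hc₀, hc₀val⟩ := Finset.exists_mem_eq_inf' hW cnt
      have htval : t = cnt c₀ := by rw [ht, dif_pos hW, hc₀val]
      rw [htval]
      -- exchange argument
      by_contra hlt
      push_neg at hlt
      have hc₀ne : c ≠ c₀ := fun h => hc (h ▸ hc₀)
      set W₁ := insert c (W₀.erase c₀) with hW₁
      have hcmem : c ∉ W₀.erase c₀ := fun h => hc (Finset.mem_of_mem_erase h)
      have hW₁card : W₁.card = k := by
        rw [hW₁, Finset.card_insert_of_notMem hcmem, Finset.card_erase_of_mem hc₀,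
          hW₀mem]
        have hk1 : 1 ≤ k := by
          rw [← hW₀mem]
          exact Finset.card_pos.2 hW
        omega
      have hsum : ∑ x ∈ W₁, cnt x = ∑ x ∈ W₀.erase c₀, cnt x + cnt c := by
        rw [hW₁, Finset.sum_insert hcmem]; ring
      have hsum₀ : ∑ x ∈ W₀, cnt x = ∑ x ∈ W₀.erase c₀, cnt x + cnt c₀ := by
        rw [Finset.sum_erase_add _ _ hc₀]
      have := hW₀max W₁ (Finset.mem_powersetCard_univ.2 hW₁card)
      omega
    · -- W₀ empty
      rw [ht, dif_neg hW]
      exact cnt_le_n c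
  have ht0 : ∀ c ∈ W₀, cnt c = 0 → t = 0 := by
    intro c hc h0
    have := ht_in c hc
    omega
  -- the utility function
  set α : V → ℝ := fun v =>
    (k : ℝ) * t / n + ∑ c ∈ A v ∩ W₀, (((cnt c : ℝ) - t) / cnt c) with hα
  -- per-term nonnegativity
  have term_nonneg : ∀ c ∈ W₀, (0 : ℝ) ≤ ((cnt c : ℝ) - t) / cnt c := by
    intro c hc
    rcases Nat.eq_zero_or_pos (cnt c) with h0 | hpos
    · simp [h0]
    · apply div_nonneg
      · have := ht_in c hc
        have : (t : ℝ) ≤ (cnt c : ℝ) := by exact_mod_cast this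
        linarith
      · exact Nat.cast_nonneg _
  have hα_nonneg : ∀ v, 0 ≤ α v := by
    intro v
    rw [hα]
    have h1 : (0 : ℝ) ≤ (k : ℝ) * t / n :=
      div_nonneg (mul_nonneg (Nat.cast_nonneg _) (Nat.cast_nonneg _)) (Nat.cast_nonneg _)
    have h2 : (0 : ℝ) ≤ ∑ c ∈ A v ∩ W₀, (((cnt c : ℝ) - t) / cnt c) :=
      Finset.sum_nonneg fun c hc => term_nonneg c (Finset.mem_of_mem_inter_right hc)
    linarith
  -- the value of each committee member distributed to its approvers
  have hdistrib : ∀ c ∈ W₀,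
      ((cnt c : ℝ)) * (((cnt c : ℝ) - t) / cnt c) = (cnt c : ℝ) - t := by
    intro c hc
    rcases Nat.eq_zero_or_pos (cnt c) with h0 | hpos
    · have ht0' := ht0 c hc h0
      rw [h0, ht0']
      norm_num
    · have hne : (cnt c : ℝ) ≠ 0 := Nat.cast_ne_zero.2 hpos.ne'
      rw [mul_comm, div_mul_cancel₀ _ hne]
  -- total sum of α
  have hα_sum : ∑ v : V, α v = ∑ v : V, ((A v ∩ W₀).card : ℝ) := by
    rw [hdc_card Finset.univ W₀]
    have h1 : ∑ v : V, α v
        = (n : ℝ) * ((k : ℝ) * t / n)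
          + ∑ c ∈ W₀, ((Finset.univ.filter fun v => c ∈ A v).card : ℝ)
              * (((cnt c : ℝ) - t) / cnt c) := by
      rw [hα]
      rw [Finset.sum_add_distrib, Finset.sum_const, nsmul_eq_mul,
        hdc Finset.univ W₀ (fun c => ((cnt c : ℝ) - t) / cnt c), Finset.card_univ]
    rw [h1]
    have hnne : (n : ℝ) ≠ 0 := Nat.cast_ne_zero.2 hn0.ne'
    have h2 : (n : ℝ) * ((k : ℝ) * t / n) = (k : ℝ) * t := by
      rw [mul_comm, div_mul_cancel₀ _ hnne]
    rw [h2]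
    have h3 : ∑ c ∈ W₀, ((Finset.univ.filter fun v => c ∈ A v).card : ℝ)
        * (((cnt c : ℝ) - t) / cnt c) = ∑ c ∈ W₀, ((cnt c : ℝ) - t) := by
      refine Finset.sum_congr rfl fun c hc => ?_
      exact hdistrib c hc
    rw [h3, Finset.sum_sub_distrib, Finset.sum_const, nsmul_eq_mul, hW₀mem]
    ring
  refine ⟨α, W₀, hW₀mem, ?_, hα_nonneg, hα_sum, ?_⟩
  · -- optimality of W₀
    intro W hW
    rw [hdc_card Finset.univ W, hdc_card Finset.univ W₀]
    have := hW₀max W (Finset.mem_powersetCard_univ.2 hW)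
    exact_mod_cast this
  · -- core condition
    intro V' W' hcard
    set m : ℕ := V'.card with hm
    set cS : C → ℕ := fun c => (V'.filter fun v => c ∈ A v).card with hcS
    rw [hdc_card V' W']
    have hRHS : ∑ v ∈ V', α v
        = (m : ℝ) * ((k : ℝ) * t / n)
          + ∑ c ∈ W₀, (cS c : ℝ) * (((cnt c : ℝ) - t) / cnt c) := by
      rw [hα, Finset.sum_add_distrib, Finset.sum_const, nsmul_eq_mul,
        hdc V' W₀ (fun c => ((cnt c : ℝ) - t) / cnt c)]
    rw [hRHS]
    -- per-candidate bound
    have hper : ∀ c, (cS c : ℝ)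
        ≤ (t : ℝ) + (if c ∈ W₀ then (cS c : ℝ) * (((cnt c : ℝ) - t) / cnt c) else 0) := by
      intro c
      have hle : (cS c : ℝ) ≤ (cnt c : ℝ) := by exact_mod_cast cntS_le V' c
      by_cases hc : c ∈ W₀
      · rw [if_pos hc]
        rcases Nat.eq_zero_or_pos (cnt c) with h0 | hpos
        · have hcS0 : cS c = 0 := Nat.le_zero.1 (h0 ▸ cntS_le V' c)
          rw [hcS0]
          rw [Nat.cast_zero, zero_mul, add_zero]
          exact Nat.cast_nonneg _
        · have hposR : (0 : ℝ) < (cnt c : ℝ) := by exact_mod_cast hpos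
          have htle : (t : ℝ) ≤ (cnt c : ℝ) := by exact_mod_cast ht_in c hc
          have key : (cS c : ℝ) * (cnt c : ℝ)
              ≤ ((t : ℝ) + (cS c : ℝ) * (((cnt c : ℝ) - t) / cnt c)) * (cnt c : ℝ) := by
            have : (cS c : ℝ) * (((cnt c : ℝ) - t) / cnt c) * (cnt c : ℝ)
                = (cS c : ℝ) * ((cnt c : ℝ) - t) := by
              rw [mul_assoc, div_mul_cancel₀ _ hposR.ne']
            rw [add_mul, this]
            have hts : (cS c : ℝ) * t ≤ (cnt c : ℝ) * t := by
              apply mul_le_mul_of_nonneg_right hle (Nat.cast_nonneg _)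
            nlinarith [hts]
          exact le_of_mul_le_mul_right key hposR
      · rw [if_neg hc]
        have : (cnt c : ℝ) ≤ (t : ℝ) := by exact_mod_cast ht_out c hc
        linarith
    calc ∑ c ∈ W', (cS c : ℝ)
        ≤ ∑ c ∈ W', ((t : ℝ)
            + (if c ∈ W₀ then (cS c : ℝ) * (((cnt c : ℝ) - t) / cnt c) else 0)) :=
          Finset.sum_le_sum fun c _ => hper c
      _ = (W'.card : ℝ) * t
          + ∑ c ∈ W' ∩ W₀, (cS c : ℝ) * (((cnt c : ℝ) - t) / cnt c) := by
          rw [Finset.sum_add_distrib, Finset.sum_const, nsmul_eq_mul,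
            ← Finset.sum_filter, Finset.filter_mem_eq_inter]
      _ ≤ (m : ℝ) * ((k : ℝ) * t / n)
          + ∑ c ∈ W₀, (cS c : ℝ) * (((cnt c : ℝ) - t) / cnt c) := by
          have hA : (W'.card : ℝ) * t ≤ (m : ℝ) * ((k : ℝ) * t / n) := by
            have h1 : (W'.card : ℝ) ≤ ((m * k / n : ℕ) : ℝ) := by exact_mod_cast hcard
            have h2 : ((m * k / n : ℕ) : ℝ) ≤ (m : ℝ) * k / n := by
              have := Nat.cast_div_le (α := ℝ) (m := m * k) (n := n)
              push_cast at this
              linarith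
            have ht0' : (0 : ℝ) ≤ (t : ℝ) := Nat.cast_nonneg _
            calc (W'.card : ℝ) * t ≤ ((m : ℝ) * k / n) * t := by
                  apply mul_le_mul_of_nonneg_right (h1.trans h2) ht0'
              _ = (m : ℝ) * ((k : ℝ) * t / n) := by ring
          have hB : ∑ c ∈ W' ∩ W₀, (cS c : ℝ) * (((cnt c : ℝ) - t) / cnt c)
              ≤ ∑ c ∈ W₀, (cS c : ℝ) * (((cnt c : ℝ) - t) / cnt c) := by
            apply Finset.sum_le_sum_of_subset_of_nonneg (Finset.inter_subset_right)
            intro c hc _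
            exact mul_nonneg (Nat.cast_nonneg _) (term_nonneg c hc)
          linarith
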